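/- Let f: ℝ^k → ℝ be twice continuously differentiable and suppose there exist symmetric matrices H⁻, H⁺ with H⁻ ⪯ Hess f(x) ⪯ H⁺ for all x. Let Z be an ℝ^k-valued random variable with mean μ and covariance matrix Σ, with f(Z) integrable. Then (1/2)·trace(H⁻Σ) ≤ E[f(Z)] − f(μ) ≤ (1/2)·trace(H⁺Σ). -/

import Mathlib

open MeasureTheory Matrix

open Set in
lemma taylor_pt {k : ℕ} {f : (Fin k → ℝ) → ℝ} (hf : ContDiff ℝ 2 f)
    (μv z : Fin k → ℝ) :
    ∃ x' : Fin k → ℝ, f z - f μv - fderiv ℝ f μv (z - μv)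
      = (1/2) * iteratedFDeriv ℝ 2 f x' (fun _ => (z - μv)) := by
  set v := z - μv with hv
  set φ : ℝ → ℝ := fun t => f (μv + t • v) with hφdef
  have hL : ∀ t : ℝ, HasDerivAt (fun s : ℝ => μv + s • v) v t := fun t => by
    simpa using ((hasDerivAt_id t).smul_const v).const_add μv
  have hφ1 : ∀ t, HasDerivAt φ (fderiv ℝ f (μv + t • v) v) t := fun t => by
    exact
      ((hf.differentiable (by norm_num) _).hasFDerivAt).comp_hasDerivAt t (hL t)
  have hF : ContDiff ℝ 1 (fderiv ℝ f) := hf.fderiv_right (by norm_num)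
  have hφ2 : ∀ t, HasDerivAt (fun s => fderiv ℝ f (μv + s • v) v)
      (fderiv ℝ (fderiv ℝ f) (μv + t • v) v v) t := fun t => by
    have h1 : HasDerivAt (fun s => fderiv ℝ f (μv + s • v))
        (fderiv ℝ (fderiv ℝ f) (μv + t • v) v) t :=
      ((hF.differentiable one_ne_zero _).hasFDerivAt).comp_hasDerivAt t (hL t)
    simpa using h1.clm_apply (hasDerivAt_const t v)
  have hderiv1 : deriv φ = fun t => fderiv ℝ f (μv + t • v) v :=
    funext fun t => (hφ1 t).deriv
  have hφC2 : ContDiff ℝ 2 φ :=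
    hf.comp (contDiff_const.add (contDiff_id.smul contDiff_const))
  have hU : UniqueDiffOn ℝ (Icc (0:ℝ) 1) := uniqueDiffOn_Icc zero_lt_one
  have hEq : ∀ x ∈ Icc (0:ℝ) 1, iteratedDerivWithin 1 φ (Icc 0 1) x = deriv φ x := by
    intro x hx
    rw [iteratedDerivWithin_one]
    exact (hφ1 x).differentiableAt.derivWithin (hU x hx)
  obtain ⟨x', hx', hT⟩ := taylor_mean_remainder_lagrange (n := 1) (f := φ)
    (by norm_num : (0:ℝ) ≠ 1) ((hφC2.of_le one_le_two).contDiffOn)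
    (by
      rw [uIcc_of_le zero_le_one, uIoo_of_le zero_le_one]
      apply DifferentiableOn.congr ?_ (fun x hx => hEq x (Ioo_subset_Icc_self hx))
      rw [hderiv1]
      exact fun x _ => ((hφ2 x).differentiableAt).differentiableWithinAt)
  rw [uIcc_of_le zero_le_one] at hT
  rw [uIoo_of_le zero_le_one] at hx'
  refine ⟨μv + x' • v, ?_⟩
  have hx'Icc : x' ∈ Icc (0:ℝ) 1 := Ioo_subset_Icc_self hx'
  have h2 : iteratedDerivWithin 2 φ (Icc 0 1) x' = deriv (deriv φ) x' := by
    have : (2:ℕ) = 1 + 1 := rfl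
    rw [this, iteratedDerivWithin_succ,
      derivWithin_congr hEq (hEq x' hx'Icc)]
    have : DifferentiableAt ℝ (deriv φ) x' := by
      rw [hderiv1]; exact (hφ2 x').differentiableAt
    exact this.derivWithin (hU x' hx'Icc)
  have hD2 : deriv (deriv φ) x' = iteratedFDeriv ℝ 2 f (μv + x' • v) (fun _ => v) := by
    rw [hderiv1, iteratedFDeriv_two_apply]
    exact (hφ2 x').deriv
  have hTay : taylorWithinEval φ 1 (Icc 0 1) 0 1 = φ 0 + fderiv ℝ f μv v := by
    simp [taylorWithinEval_succ, taylor_within_zero_eval, hEq 0 (by norm_num), hderiv1]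
  have hφ0 : φ 0 = f μv := by simp [hφdef]
  have hφ1' : φ 1 = f z := by simp [hφdef, hv]
  rw [hTay, hφ0, hφ1'] at hT
  rw [h2, hD2] at hT
  rw [show f z - f μv - fderiv ℝ f μv v = f z - (f μv + fderiv ℝ f μv v) by ring, hT]
  norm_num [Nat.factorial]
  ring


/-- If `f : ℝ^k → ℝ` is `C²` with `H⁻ ⪯ Hess f(x) ⪯ H⁺` everywhere
(the Hessian quadratic form is encoded via the second iterated Fréchet derivative),
and `Z` is a random vector with mean `μv` and covariance `Σm`, with `f(Z)` integrable,
then `(1/2)·tr(H⁻Σ) ≤ E[f(Z)] − f(μ) ≤ (1/2)·tr(H⁺Σ)`. -/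
theorem expectation_taylor_trace_bounds {Ω : Type*} [MeasurableSpace Ω]
    (μ : Measure Ω) [IsProbabilityMeasure μ] (k : ℕ)
    (f : (Fin k → ℝ) → ℝ) (hf : ContDiff ℝ 2 f)
    (Hm Hp : Matrix (Fin k) (Fin k) ℝ) (hHm : Hm.IsSymm) (hHp : Hp.IsSymm)
    (hHess : ∀ x u, u ⬝ᵥ Hm.mulVec u ≤ iteratedFDeriv ℝ 2 f x (fun _ => u)
        ∧ iteratedFDeriv ℝ 2 f x (fun _ => u) ≤ u ⬝ᵥ Hp.mulVec u)
    (Z : Ω → (Fin k → ℝ)) (hZmeas : ∀ i, MemLp (fun ω => Z ω i) 2 μ)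
    (μv : Fin k → ℝ) (hmean : ∀ i, ∫ ω, Z ω i ∂μ = μv i)
    (Sm : Matrix (Fin k) (Fin k) ℝ)
    (hcov : ∀ i j, Sm i j = ∫ ω, (Z ω i - μv i) * (Z ω j - μv j) ∂μ)
    (hint : Integrable (fun ω => f (Z ω)) μ) :
    (1 / 2) * (Hm * Sm).trace ≤ (∫ ω, f (Z ω) ∂μ) - f μv
      ∧ (∫ ω, f (Z ω) ∂μ) - f μv ≤ (1 / 2) * (Hp * Sm).trace := by
  -- linear functional expansion
  set c : Fin k → ℝ := fun i => fderiv ℝ f μv (Pi.single i 1) with hc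
  have hlin : ∀ w : Fin k → ℝ, fderiv ℝ f μv w = ∑ i, w i * c i := by
    intro w
    conv_lhs => rw [show w = ∑ i, w i • (Pi.single i 1 : Fin k → ℝ) by
      ext j; simp [Pi.single_apply, Finset.sum_ite_eq]]
    rw [map_sum]
    simp [smul_eq_mul, hc]
  set D : Ω → ℝ := fun ω => ∑ i, (Z ω i - μv i) * c i with hDdef
  have hD : ∀ ω, fderiv ℝ f μv (Z ω - μv) = D ω := fun ω => by
    rw [hlin]; rfl
  -- integrability basics
  have hZint : ∀ i, Integrable (fun ω => Z ω i) μ := fun i =>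
    (hZmeas i).integrable one_le_two
  have hL2 : ∀ i, MemLp (fun ω => Z ω i - μv i) 2 μ := fun i =>
    (hZmeas i).sub (memLp_const _)
  have hprod : ∀ i j, Integrable (fun ω => (Z ω i - μv i) * (Z ω j - μv j)) μ := by
    intro i j
    have h : MemLp ((fun ω => Z ω i - μv i) • (fun ω => Z ω j - μv j)) 1 μ :=
      (hL2 j).smul (hL2 i)
    exact (memLp_one_iff_integrable.mp h)
  have hmean0 : ∀ i, ∫ ω, (Z ω i - μv i) ∂μ = 0 := fun i => by
    rw [integral_sub (hZint i) (integrable_const _), hmean i, integral_const]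
    simp
  have hDsummand : ∀ i, Integrable (fun ω => (Z ω i - μv i) * c i) μ := fun i =>
    ((hZint i).sub (integrable_const _)).mul_const _
  have hDint : Integrable D μ := by
    rw [hDdef]
    exact integrable_finset_sum _ (fun i _ => hDsummand i)
  have hDzero : ∫ ω, D ω ∂μ = 0 := by
    rw [hDdef, integral_finset_sum _ (fun i _ => hDsummand i)]
    refine Finset.sum_eq_zero fun i _ => ?_
    rw [integral_mul_const, hmean0]; simp
  -- quadratic form
  have hQexp : ∀ (H : Matrix (Fin k) (Fin k) ℝ) ω,
      (Z ω - μv) ⬝ᵥ H.mulVec (Z ω - μv)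
        = ∑ i, ∑ j, H i j * ((Z ω i - μv i) * (Z ω j - μv j)) := by
    intro H ω
    simp only [dotProduct, Matrix.mulVec, Pi.sub_apply, Finset.mul_sum]
    congr 1; ext i; congr 1; ext j; ring
  have hQint : ∀ (H : Matrix (Fin k) (Fin k) ℝ),
      Integrable (fun ω => (Z ω - μv) ⬝ᵥ H.mulVec (Z ω - μv)) μ := by
    intro H
    have h0 : Integrable (fun ω => ∑ i, ∑ j, H i j * ((Z ω i - μv i) * (Z ω j - μv j))) μ :=
      integrable_finset_sum _ (fun i _ =>
        integrable_finset_sum _ (fun j _ => (hprod i j).const_mul _))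
    exact h0.congr (Filter.Eventually.of_forall fun ω => (hQexp H ω).symm)
  have hSmsymm : ∀ i j, Sm j i = Sm i j := by
    intro i j
    rw [hcov, hcov]
    simp_rw [mul_comm]
  have hQval : ∀ (H : Matrix (Fin k) (Fin k) ℝ),
      ∫ ω, (Z ω - μv) ⬝ᵥ H.mulVec (Z ω - μv) ∂μ = (H * Sm).trace := by
    intro H
    have : ∫ ω, (Z ω - μv) ⬝ᵥ H.mulVec (Z ω - μv) ∂μ
        = ∫ ω, ∑ i, ∑ j, H i j * ((Z ω i - μv i) * (Z ω j - μv j)) ∂μ := by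
      congr 1; ext ω; exact hQexp H ω
    rw [this, integral_finset_sum _ (fun i _ =>
      integrable_finset_sum _ (fun j _ => (hprod i j).const_mul (H i j)))]
    have : ∀ i, ∫ ω, ∑ j, H i j * ((Z ω i - μv i) * (Z ω j - μv j)) ∂μ
        = ∑ j, H i j * Sm i j := by
      intro i
      rw [integral_finset_sum _ (fun j _ => (hprod i j).const_mul (H i j))]
      refine Finset.sum_congr rfl fun j _ => ?_
      rw [integral_const_mul, ← hcov]
    simp_rw [this]
    rw [Matrix.trace]
    refine Finset.sum_congr rfl fun i _ => ?_
    rw [Matrix.diag_apply, Matrix.mul_apply]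
    exact Finset.sum_congr rfl fun j _ => by rw [hSmsymm]
  -- pointwise Taylor bound
  have hpt : ∀ ω,
      (1/2) * ((Z ω - μv) ⬝ᵥ Hm.mulVec (Z ω - μv)) ≤ f (Z ω) - f μv - D ω
      ∧ f (Z ω) - f μv - D ω ≤ (1/2) * ((Z ω - μv) ⬝ᵥ Hp.mulVec (Z ω - μv)) := by
    intro ω
    obtain ⟨x', hx'⟩ := taylor_pt hf μv (Z ω)
    have hmid : f (Z ω) - f μv - D ω
        = (1/2) * iteratedFDeriv ℝ 2 f x' (fun _ => (Z ω - μv)) := by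
      rw [← hD ω]; exact hx'
    have h1 := (hHess x' (Z ω - μv)).1
    have h2 := (hHess x' (Z ω - μv)).2
    rw [hmid]
    constructor <;> linarith
  have hmid_int : Integrable (fun ω => f (Z ω) - f μv - D ω) μ :=
    (hint.sub (integrable_const _)).sub hDint
  have hfc : Integrable (fun ω => f (Z ω) - f μv) μ := hint.sub (integrable_const _)
  have hmid_val : ∫ ω, (f (Z ω) - f μv - D ω) ∂μ = (∫ ω, f (Z ω) ∂μ) - f μv := by
    have e1 : ∫ ω, (f (Z ω) - f μv - D ω) ∂μ
        = (∫ ω, (f (Z ω) - f μv) ∂μ) - ∫ ω, D ω ∂μ := integral_sub hfc hDint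
    have e2 : ∫ ω, (f (Z ω) - f μv) ∂μ
        = (∫ ω, f (Z ω) ∂μ) - ∫ (_ : Ω), f μv ∂μ := integral_sub hint (integrable_const _)
    rw [e1, e2, hDzero, integral_const]
    simp
  constructor
  · have := integral_mono ((hQint Hm).const_mul (1/2)) hmid_int (fun ω => (hpt ω).1)
    rwa [integral_const_mul, hQval, hmid_val] at this
  · have := integral_mono hmid_int ((hQint Hp).const_mul (1/2)) (fun ω => (hpt ω).2)
    rwa [integral_const_mul, hQval, hmid_val] at this
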